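/- For the e(2)-type Poisson structure {x₁,x₂}=0, {x₁,x₃}=−x₂, {x₂,x₃}=x₁ on ℝ³ restricted to polynomial functions, the vector field E = x₁∂₁ + x₂∂₂ is Poisson but not Hamiltonian: the derivation f ↦ E(f) satisfies E({f,g}) = {E(f), g} + {f, E(g)} for all polynomials f,g, yet there is no polynomial h with X_h = E (i.e., no h with {h, x₁} = x₁, {h, x₂} = x₂, {h, x₃} = 0). -/
import Mathlib


open MvPolynomial

/-- The e(2) linear Poisson bracket `{x₁,x₂}=0`, `{x₁,x₃}=−x₂`, `{x₂,x₃}=x₁` on the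
polynomial algebra `ℝ[x₁,x₂,x₃]`, extended by bilinearity and Leibniz:
`{f,g} = Σᵢⱼ πⁱʲ ∂ᵢf ∂ⱼg`. -/
noncomputable def e2pbr (f g : MvPolynomial (Fin 3) ℝ) : MvPolynomial (Fin 3) ℝ :=
  (-(X 1)) * (pderiv 0 f * pderiv 2 g - pderiv 2 f * pderiv 0 g)
    + (X 0) * (pderiv 1 f * pderiv 2 g - pderiv 2 f * pderiv 1 g)

/-- The Euler-type vector field `E = x₁∂₁ + x₂∂₂` acting as a derivation. -/
noncomputable def eulerE (f : MvPolynomial (Fin 3) ℝ) : MvPolynomial (Fin 3) ℝ :=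
  X 0 * pderiv 0 f + X 1 * pderiv 1 f

lemma pd_comm (i j : Fin 3) (f : MvPolynomial (Fin 3) ℝ) :
    pderiv i (pderiv j f) = pderiv j (pderiv i f) := by
  induction f using MvPolynomial.induction_on with
  | C a => simp
  | add p q hp hq => simp [hp, hq]
  | mul_X p k hp =>
    simp only [pderiv_mul, map_add, hp, pderiv_X]
    have h1 : pderiv i ((Pi.single j 1 : Fin 3 → MvPolynomial (Fin 3) ℝ) k) = 0 := by
      by_cases h : j = k
      · subst h; simp
      · rw [Pi.single_eq_of_ne (Ne.symm h)]; simp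
    have h2 : pderiv j ((Pi.single i 1 : Fin 3 → MvPolynomial (Fin 3) ℝ) k) = 0 := by
      by_cases h : i = k
      · subst h; simp
      · rw [Pi.single_eq_of_ne (Ne.symm h)]; simp
    simp [h1, h2]
    ring

/-- For the e(2)-type Poisson structure on polynomials, the vector field
`E = x₁∂₁ + x₂∂₂` is Poisson (a derivation of the bracket) but not Hamiltonian:
no polynomial `h` satisfies `{h,x₁} = x₁`, `{h,x₂} = x₂`, `{h,x₃} = 0`. -/
theorem e2_euler_poisson_not_hamiltonian :
    (∀ f g : MvPolynomial (Fin 3) ℝ,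
      eulerE (e2pbr f g) = e2pbr (eulerE f) g + e2pbr f (eulerE g)) ∧
    ¬ ∃ h : MvPolynomial (Fin 3) ℝ,
        e2pbr h (X 0) = X 0 ∧ e2pbr h (X 1) = X 1 ∧ e2pbr h (X 2) = 0 := by
  constructor
  · intro f g
    simp only [e2pbr, eulerE, pderiv_mul, map_add, map_neg, map_sub, map_mul, pderiv_X]
    simp only [pd_comm 0 1, pd_comm 0 2, pd_comm 1 2]
    norm_num [Pi.single_apply, (by decide : ¬((0:Fin 3)=2)), (by decide : ¬((1:Fin 3)=2))]
    ring
  · rintro ⟨h, h1, _, _⟩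
    have e1 : e2pbr h (X 0) = X 1 * pderiv 2 h := by
      simp [e2pbr, (by decide : ¬((1:Fin 3)=0)), (by decide : ¬((2:Fin 3)=0))]
    rw [e1] at h1
    have := congrArg (MvPolynomial.eval (fun i => if i = 0 then (1:ℝ) else 0)) h1
    simp at this
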